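/- Supersaturation: Let k ≥ 2 and N ∈ ℕ be fixed, let F be a nonempty collection of k-colourings of K_N, and set P = Forb(F); assume P_n ≠ ∅ for all n so that π(P) is defined. For every ε with 0 < ε < 1 there exist constants n₀ ∈ ℕ and C₀ > 0 such that for all n ≥ n₀ and every k-colouring template t for K_n with Ent(t) > (π(P)+ε)·C(n,2), the number of pairs (φ, c) with φ ∈ binom(K_n, K_N), c ∈ F and c ∈ ⟨t|φ⟩ is at least C₀·ε·C(n,N). -/

import Mathlib

open Filter

abbrev Edge (n : ℕ) := {p : Fin n × Fin n // p.1 < p.2}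

abbrev Colouring (k n : ℕ) := Edge n → Fin k

abbrev Template (k n : ℕ) := Edge n → Finset (Fin k)

def Proper {k n : ℕ} (t : Template k n) : Prop := ∀ e, (t e).Nonempty

def Realises {k n : ℕ} (c : Colouring k n) (t : Template k n) : Prop := ∀ e, c e ∈ t e

noncomputable def Ent {k n : ℕ} (t : Template k n) : ℝ :=
  ∑ e : Edge n, Real.logb k ((t e).card)

def Edge.map {m n : ℕ} (φ : Fin m → Fin n) (h : StrictMono φ) (e : Edge m) : Edge n :=
  ⟨(φ e.1.1, φ e.1.2), h e.2⟩

def restrictC {k m n : ℕ} (c : Colouring k n) (φ : Fin m → Fin n) (h : StrictMono φ) :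
    Colouring k m := fun e => c (Edge.map φ h e)

def restrictT {k m n : ℕ} (t : Template k n) (φ : Fin m → Fin n) (h : StrictMono φ) :
    Template k m := fun e => t (Edge.map φ h e)

def Forb {k N : ℕ} (F : Set (Colouring k N)) (n : ℕ) : Set (Colouring k n) :=
  {c | ∀ (φ : Fin N → Fin n) (h : StrictMono φ), restrictC c φ h ∉ F}

def OrderHereditary {k : ℕ} (P : ∀ n, Set (Colouring k n)) : Prop :=
  ∀ (m n : ℕ) (φ : Fin m → Fin n) (h : StrictMono φ) (c : Colouring k n),
    c ∈ P n → restrictC c φ h ∈ P m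

noncomputable def exEnt {k n : ℕ} (A : Set (Colouring k n)) : ℝ :=
  sSup {x | ∃ t : Template k n, Proper t ∧ (∀ c, Realises c t → c ∈ A) ∧ Ent t = x}

noncomputable def badPairs {k N n : ℕ} (t : Template k n) (F : Set (Colouring k N)) : ℕ :=
  Set.ncard {p : (Fin N → Fin n) × Colouring k N |
    ∃ h : StrictMono p.1, p.2 ∈ F ∧ Realises p.2 (restrictT t p.1 h)}

def TemplateLE {k m n : ℕ} (t : Template k m) (t' : Template k n) : Prop :=
  ∃ (φ : Fin m → Fin n) (h : StrictMono φ), ∀ e, t e ⊆ restrictT t' φ h e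

def IsContainerFamily {k n : ℕ} (T : Finset (Template k n)) (A : Set (Colouring k n)) : Prop :=
  ∀ t : Template k n, Proper t → (∀ c, Realises c t → c ∈ A) → ∃ t' ∈ T, TemplateLE t t'

/-! ### Auxiliary lemmas for supersaturation -/

lemma card_edge (n : ℕ) : Fintype.card (Edge n) = n.choose 2 := by
  have e : Edge n ≃ Σ b : Fin n, Fin b.1 :=
    { toFun := fun e => ⟨e.1.2, ⟨e.1.1.1, e.2⟩⟩
      invFun := fun x => ⟨(⟨x.2.1, x.2.2.trans x.1.2⟩, x.1), x.2.2⟩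
      left_inv := fun e => rfl
      right_inv := fun x => rfl }
  rw [Fintype.card_congr e, Fintype.card_sigma]
  simp only [Fintype.card_fin]
  rw [show (∑ x : Fin n, (x : ℕ)) = ∑ i ∈ Finset.range n, i from
    Fin.sum_univ_eq_sum_range (fun i => i) n, Nat.choose_two_right]
  have := Finset.sum_range_id_mul_two n
  omega

lemma card_sm_filter {n m : ℕ} (w : Finset (Fin n)) (hwm : w.card ≤ m) :
    (Finset.univ.filter (fun φ : {φ : Fin m → Fin n // StrictMono φ} =>
        w ⊆ Finset.image φ.1 Finset.univ)).card = (n - w.card).choose (m - w.card) := by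
  classical
  have hpc : ((Finset.univ \ w).powersetCard (m - w.card)).card
      = (n - w.card).choose (m - w.card) := by
    rw [Finset.card_powersetCard, Finset.card_sdiff_of_subset (Finset.subset_univ w),
      Finset.card_univ, Fintype.card_fin]
  have hdisj : ∀ s ∈ (Finset.univ \ w).powersetCard (m - w.card), Disjoint s w := fun s hs =>
    Finset.disjoint_of_subset_left (Finset.mem_powersetCard.mp hs).1 Finset.sdiff_disjoint
  have hcard : ∀ s ∈ (Finset.univ \ w).powersetCard (m - w.card), (s ∪ w).card = m := by
    intro s hs
    rw [Finset.card_union_of_disjoint (hdisj s hs), (Finset.mem_powersetCard.mp hs).2,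
      Nat.sub_add_cancel hwm]
  rw [← hpc]
  refine Finset.card_bij' (fun φ _ => Finset.image φ.1 Finset.univ \ w)
    (fun s hs => ⟨(s ∪ w).orderEmbOfFin (hcard s hs),
      ((s ∪ w).orderEmbOfFin (hcard s hs)).strictMono⟩) ?_ ?_ ?_ ?_
  · intro φ hφ
    have hw : w ⊆ Finset.image φ.1 Finset.univ := (Finset.mem_filter.mp hφ).2
    rw [Finset.mem_powersetCard]
    constructor
    · exact Finset.sdiff_subset_sdiff (Finset.subset_univ _) le_rfl
    · rw [Finset.card_sdiff_of_subset hw, Finset.card_image_of_injective _ φ.2.injective,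
        Finset.card_univ, Fintype.card_fin]
  · intro s hs
    rw [Finset.mem_filter]
    refine ⟨Finset.mem_univ _, fun x hx => ?_⟩
    have hx' : x ∈ Set.range ⇑((s ∪ w).orderEmbOfFin (hcard s hs)) := by
      rw [Finset.range_orderEmbOfFin]
      exact Finset.mem_coe.mpr (Finset.mem_union_right _ hx)
    obtain ⟨i, hi⟩ := hx'
    exact Finset.mem_image.mpr ⟨i, Finset.mem_univ _, hi⟩
  · intro φ hφ
    have hw : w ⊆ Finset.image φ.1 Finset.univ := (Finset.mem_filter.mp hφ).2
    have him : Finset.image φ.1 Finset.univ \ w ∪ w = Finset.image φ.1 Finset.univ :=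
      Finset.sdiff_union_of_subset hw
    apply Subtype.ext
    have hmem : ∀ x, φ.1 x ∈ Finset.image φ.1 Finset.univ \ w ∪ w := by
      intro x; rw [him]; exact Finset.mem_image_of_mem _ (Finset.mem_univ x)
    exact (Finset.orderEmbOfFin_unique _ hmem φ.2).symm
  · intro s hs
    have him : Finset.image (⇑((s ∪ w).orderEmbOfFin (hcard s hs))) Finset.univ = s ∪ w := by
      apply Finset.coe_injective
      rw [Finset.coe_image, Finset.coe_univ, Set.image_univ, Finset.range_orderEmbOfFin]
    simp only [him]
    exact Finset.union_sdiff_cancel_right (hdisj s hs)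

lemma cnt_eq {n m : ℕ} (hm : 2 ≤ m) (e : Edge n) :
    (Finset.univ.filter (fun p : {φ : Fin m → Fin n // StrictMono φ} × Edge m =>
      Edge.map p.1.1 p.1.2 p.2 = e)).card = (n - 2).choose (m - 2) := by
  classical
  have hab : e.1.1 ≠ e.1.2 := ne_of_lt e.2
  have hw : ({e.1.1, e.1.2} : Finset (Fin n)).card = 2 := by
    rw [Finset.card_insert_of_notMem (by simpa using hab), Finset.card_singleton]
  have key := card_sm_filter (n := n) (m := m) {e.1.1, e.1.2} (by rw [hw]; exact hm)
  rw [hw] at key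
  rw [← key]
  refine Finset.card_bij (fun p _ => p.1) ?_ ?_ ?_
  · intro p hp
    have hp' := (Finset.mem_filter.mp hp).2
    have h1 : p.1.1 p.2.1.1 = e.1.1 := congrArg (fun x => x.1.1) hp'
    have h2 : p.1.1 p.2.1.2 = e.1.2 := congrArg (fun x => x.1.2) hp'
    rw [Finset.mem_filter]
    refine ⟨Finset.mem_univ _, ?_⟩
    intro x hx
    rcases Finset.mem_insert.mp hx with rfl | hx
    · exact Finset.mem_image.mpr ⟨p.2.1.1, Finset.mem_univ _, h1⟩
    · rw [Finset.mem_singleton] at hx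
      subst hx
      exact Finset.mem_image.mpr ⟨p.2.1.2, Finset.mem_univ _, h2⟩
  · intro p hp q hq hpq
    have hp' := (Finset.mem_filter.mp hp).2
    have hq' := (Finset.mem_filter.mp hq).2
    have e1p : p.1.1 p.2.1.1 = e.1.1 := congrArg (fun x => x.1.1) hp'
    have e2p : p.1.1 p.2.1.2 = e.1.2 := congrArg (fun x => x.1.2) hp'
    have e1q : q.1.1 q.2.1.1 = e.1.1 := congrArg (fun x => x.1.1) hq'
    have e2q : q.1.1 q.2.1.2 = e.1.2 := congrArg (fun x => x.1.2) hq'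
    rw [← hpq] at e1q e2q
    exact Prod.ext hpq (Subtype.ext (Prod.ext (p.1.2.injective (e1p.trans e1q.symm))
      (p.1.2.injective (e2p.trans e2q.symm))))
  · intro φ hφ
    have hφ' := (Finset.mem_filter.mp hφ).2
    obtain ⟨i, _, hi⟩ := Finset.mem_image.mp (hφ' (Finset.mem_insert_self _ _))
    obtain ⟨j, _, hj⟩ := Finset.mem_image.mp
      (hφ' (Finset.mem_insert_of_mem (Finset.mem_singleton_self _)))
    have hij : i < j := by
      rw [← φ.2.lt_iff_lt, hi, hj]; exact e.2
    refine ⟨(φ, ⟨(i, j), hij⟩), Finset.mem_filter.mpr ⟨Finset.mem_univ _, ?_⟩, rfl⟩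
    apply Subtype.ext
    show (φ.1 i, φ.1 j) = e.1
    rw [hi, hj]

lemma logb_card_nonneg {k : ℕ} (hk : 2 ≤ k) {s : Finset (Fin k)} (hs : s.Nonempty) :
    0 ≤ Real.logb k s.card :=
  Real.logb_nonneg (by exact_mod_cast hk.trans_lt' one_lt_two)
    (by exact_mod_cast Finset.card_pos.mpr hs)

lemma logb_card_le_one {k : ℕ} (hk : 2 ≤ k) (s : Finset (Fin k)) :
    Real.logb k s.card ≤ 1 := by
  have hb : (1 : ℝ) < k := by exact_mod_cast hk.trans_lt' one_lt_two
  rcases s.eq_empty_or_nonempty with rfl | hs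
  · simp
  have h1 : (1 : ℝ) ≤ s.card := by exact_mod_cast Finset.card_pos.mpr hs
  have h2 : (s.card : ℝ) ≤ k := by
    exact_mod_cast (Finset.card_le_univ s).trans_eq (by simp)
  calc Real.logb k s.card ≤ Real.logb k k :=
        (Real.logb_le_logb hb (by linarith) (by linarith)).mpr h2
    _ = 1 := Real.logb_self_eq_one hb

lemma ent_nonneg {k n : ℕ} (hk : 2 ≤ k) {t : Template k n} (ht : Proper t) : 0 ≤ Ent t :=
  Finset.sum_nonneg fun e _ => logb_card_nonneg hk (ht e)

lemma ent_le {k n : ℕ} (hk : 2 ≤ k) (t : Template k n) : Ent t ≤ (n.choose 2 : ℝ) := by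
  calc Ent t ≤ ∑ _e : Edge n, (1 : ℝ) :=
        Finset.sum_le_sum fun e _ => logb_card_le_one hk (t e)
    _ = (n.choose 2 : ℝ) := by
        rw [Finset.sum_const, Finset.card_univ, card_edge, nsmul_eq_mul, mul_one]

lemma exEnt_bddAbove {k n : ℕ} (hk : 2 ≤ k) (A : Set (Colouring k n)) :
    BddAbove {x | ∃ t : Template k n, Proper t ∧ (∀ c, Realises c t → c ∈ A) ∧ Ent t = x} :=
  ⟨(n.choose 2 : ℝ), by rintro x ⟨t, _, _, rfl⟩; exact ent_le hk t⟩

lemma exEnt_nonneg {k n : ℕ} (hk : 2 ≤ k) {A : Set (Colouring k n)} (hA : A.Nonempty) :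
    0 ≤ exEnt A := by
  obtain ⟨c, hc⟩ := hA
  refine le_csSup (exEnt_bddAbove hk A) ⟨fun e => {c e}, fun e => Finset.singleton_nonempty _,
    fun c' hc' => ?_, by simp [Ent]⟩
  have : c' = c := funext fun e => Finset.mem_singleton.mp (hc' e)
  rw [this]; exact hc

lemma exists_bad_realisation {k n : ℕ} (hk : 2 ≤ k) {A : Set (Colouring k n)}
    {t : Template k n} (ht : Proper t) (hEnt : exEnt A < Ent t) :
    ∃ c, Realises c t ∧ c ∉ A := by
  by_contra h
  push_neg at h
  exact absurd (le_csSup (exEnt_bddAbove hk A) ⟨t, ht, fun c hc => h c hc, rfl⟩)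
    (not_le.mpr hEnt)

set_option maxHeartbeats 2000000 in
/-- Supersaturation (Lemma 2.12). -/
theorem supersaturation (k N : ℕ) (hk : 2 ≤ k)
    (F : Set (Colouring k N)) (hF : F.Nonempty)
    (hne : ∀ n, (Forb F n).Nonempty) (π : ℝ)
    (hπ : Tendsto (fun n => exEnt (Forb F n) / (n.choose 2 : ℝ)) atTop (nhds π))
    (ε : ℝ) (hε0 : 0 < ε) (hε1 : ε < 1) :
    ∃ (n₀ : ℕ) (C₀ : ℝ), 0 < C₀ ∧ ∀ n, n₀ ≤ n → ∀ t : Template k n, Proper t →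
      (π + ε) * (n.choose 2 : ℝ) < Ent t →
      C₀ * ε * (n.choose N : ℝ) ≤ (badPairs t F : ℝ) := by
  classical
  have hπ0 : 0 ≤ π := by
    refine ge_of_tendsto hπ (eventually_atTop.mpr ⟨2, fun n hn => ?_⟩)
    exact div_nonneg (exEnt_nonneg hk (hne n)) (Nat.cast_nonneg _)
  obtain ⟨m, hm1, hm2⟩ := ((hπ.eventually_lt_const (show π < π + ε / 2 by linarith)).and
    (eventually_ge_atTop (max 2 N))).exists
  have hm2' : 2 ≤ m := le_trans (le_max_left _ _) hm2
  have hmN : N ≤ m := le_trans (le_max_right _ _) hm2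
  have hEm : (0 : ℝ) < (m.choose 2 : ℝ) := by exact_mod_cast Nat.choose_pos hm2'
  have hexm : exEnt (Forb F m) < (π + ε / 2) * (m.choose 2 : ℝ) := by
    rw [div_lt_iff₀ hEm] at hm1; exact hm1
  have hmN0 : (0 : ℝ) < (m.choose N : ℝ) := by exact_mod_cast Nat.choose_pos hmN
  refine ⟨m, 1 / (2 * (m.choose N : ℝ)), by positivity, ?_⟩
  intro n hmn t ht hEnt
  have hNn : N ≤ n := hmN.trans hmn
  -- total number of strictly monotone maps
  have hcardSM : (Finset.univ : Finset {φ : Fin m → Fin n // StrictMono φ}).card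
      = n.choose m := by
    have h0 := card_sm_filter (n := n) (m := m) ∅ (Nat.zero_le m)
    simpa using h0
  -- the big averaged sum
  set f : Edge n → ℝ := fun e => Real.logb k ((t e).card) with hf
  have hD0 : (0 : ℝ) < ((n - 2).choose (m - 2) : ℝ) := by
    exact_mod_cast Nat.choose_pos (Nat.sub_le_sub_right hmn 2)
  have hsum : ∑ φ : {φ : Fin m → Fin n // StrictMono φ}, Ent (restrictT t φ.1 φ.2)
      = ((n - 2).choose (m - 2) : ℝ) * Ent t := by
    calc ∑ φ : {φ : Fin m → Fin n // StrictMono φ}, Ent (restrictT t φ.1 φ.2)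
        = ∑ p : {φ : Fin m → Fin n // StrictMono φ} × Edge m,
            f (Edge.map p.1.1 p.1.2 p.2) := by
          rw [Fintype.sum_prod_type]; rfl
      _ = ∑ e : Edge n, ∑ _p ∈ Finset.univ.filter
            (fun p : {φ : Fin m → Fin n // StrictMono φ} × Edge m =>
              Edge.map p.1.1 p.1.2 p.2 = e), f e :=
          (Finset.sum_fiberwise' Finset.univ _ f).symm
      _ = ∑ e : Edge n, ((n - 2).choose (m - 2) : ℝ) * f e := by
          refine Finset.sum_congr rfl fun e _ => ?_
          rw [Finset.sum_const, cnt_eq hm2' e, nsmul_eq_mul]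
      _ = ((n - 2).choose (m - 2) : ℝ) * Ent t := by rw [← Finset.mul_sum]; rfl
  set B : Finset {φ : Fin m → Fin n // StrictMono φ} := Finset.univ.filter
    (fun φ => (π + ε / 2) * (m.choose 2 : ℝ) < Ent (restrictT t φ.1 φ.2)) with hBdef
  -- upper bound on the sum
  have hupper : ∑ φ : {φ : Fin m → Fin n // StrictMono φ}, Ent (restrictT t φ.1 φ.2)
      ≤ (B.card : ℝ) * (m.choose 2 : ℝ)
        + (n.choose m : ℝ) * ((π + ε / 2) * (m.choose 2 : ℝ)) := by
    rw [← Finset.sum_filter_add_sum_filter_not Finset.univ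
      (fun φ : {φ : Fin m → Fin n // StrictMono φ} =>
        (π + ε / 2) * (m.choose 2 : ℝ) < Ent (restrictT t φ.1 φ.2))]
    have h1 : ∑ φ ∈ B, Ent (restrictT t φ.1 φ.2) ≤ (B.card : ℝ) * (m.choose 2 : ℝ) := by
      calc ∑ φ ∈ B, Ent (restrictT t φ.1 φ.2) ≤ ∑ _φ ∈ B, (m.choose 2 : ℝ) :=
            Finset.sum_le_sum fun φ _ => ent_le hk _
        _ = (B.card : ℝ) * (m.choose 2 : ℝ) := by rw [Finset.sum_const, nsmul_eq_mul]
    have h2 : ∑ φ ∈ Finset.univ.filter (fun φ : {φ : Fin m → Fin n // StrictMono φ} =>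
          ¬ ((π + ε / 2) * (m.choose 2 : ℝ) < Ent (restrictT t φ.1 φ.2))),
          Ent (restrictT t φ.1 φ.2)
        ≤ (n.choose m : ℝ) * ((π + ε / 2) * (m.choose 2 : ℝ)) := by
      have hb : (0 : ℝ) ≤ (π + ε / 2) * (m.choose 2 : ℝ) := by positivity
      calc _ ≤ ∑ _φ ∈ Finset.univ.filter (fun φ : {φ : Fin m → Fin n // StrictMono φ} =>
              ¬ ((π + ε / 2) * (m.choose 2 : ℝ) < Ent (restrictT t φ.1 φ.2))),
              ((π + ε / 2) * (m.choose 2 : ℝ)) :=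
            Finset.sum_le_sum fun φ hφ => le_of_not_gt (Finset.mem_filter.mp hφ).2
        _ = ((Finset.univ.filter _).card : ℝ) * ((π + ε / 2) * (m.choose 2 : ℝ)) := by
            rw [Finset.sum_const, nsmul_eq_mul]
        _ ≤ (n.choose m : ℝ) * ((π + ε / 2) * (m.choose 2 : ℝ)) := by
            apply mul_le_mul_of_nonneg_right _ hb
            exact_mod_cast hcardSM ▸ Finset.card_le_card (Finset.filter_subset _ _)
    exact add_le_add h1 h2
  -- lower bound on the sum
  have hid : n.choose m * m.choose 2 = n.choose 2 * (n - 2).choose (m - 2) :=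
    Nat.choose_mul hm2'
  have hidR : (n.choose m : ℝ) * (m.choose 2 : ℝ)
      = (n.choose 2 : ℝ) * ((n - 2).choose (m - 2) : ℝ) := by exact_mod_cast hid
  have hlower : (n.choose m : ℝ) * (m.choose 2 : ℝ) * (π + ε)
      < ∑ φ : {φ : Fin m → Fin n // StrictMono φ}, Ent (restrictT t φ.1 φ.2) := by
    rw [hsum]
    calc (n.choose m : ℝ) * (m.choose 2 : ℝ) * (π + ε)
        = ((n - 2).choose (m - 2) : ℝ) * ((π + ε) * (n.choose 2 : ℝ)) := by
          rw [hidR]; ring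
      _ < ((n - 2).choose (m - 2) : ℝ) * Ent t := by
          exact mul_lt_mul_of_pos_left hEnt hD0
  -- conclusion of step 1
  have hBlow : (ε / 2) * (n.choose m : ℝ) < (B.card : ℝ) := by
    have hcomb := hlower.trans_le hupper
    have h3 : (ε / 2) * (n.choose m : ℝ) * (m.choose 2 : ℝ)
        < (B.card : ℝ) * (m.choose 2 : ℝ) := by nlinarith
    exact lt_of_mul_lt_mul_right h3 hEm.le
  -- step 2 : choice of bad pairs
  have hn0 : 0 < n := lt_of_lt_of_le (by omega) hmn
  have hNE : Nonempty ((Fin N → Fin n) × Colouring k N) :=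
    ⟨(fun _ => ⟨0, hn0⟩, fun _ => ⟨0, by omega⟩)⟩
  have hchoice : ∀ φ : {φ : Fin m → Fin n // StrictMono φ}, φ ∈ B →
      ∃ p : (Fin N → Fin n) × Colouring k N,
        (∃ h : StrictMono p.1, p.2 ∈ F ∧ Realises p.2 (restrictT t p.1 h)) ∧
        ∀ i, p.1 i ∈ Set.range φ.1 := by
    intro φ hφ
    have hlt : exEnt (Forb F m) < Ent (restrictT t φ.1 φ.2) :=
      hexm.trans (Finset.mem_filter.mp hφ).2
    have hproper : Proper (restrictT t φ.1 φ.2) := fun e => ht _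
    obtain ⟨c, hc1, hc2⟩ := exists_bad_realisation hk hproper hlt
    simp only [Forb, Set.mem_setOf_eq] at hc2
    push_neg at hc2
    obtain ⟨ψ, hψ, hcF⟩ := hc2
    refine ⟨(φ.1 ∘ ψ, restrictC c ψ hψ), ⟨φ.2.comp hψ, hcF, fun e => hc1 (Edge.map ψ hψ e)⟩,
      fun i => ⟨ψ i, rfl⟩⟩
  set Sset : Set ((Fin N → Fin n) × Colouring k N) :=
    {p | ∃ h : StrictMono p.1, p.2 ∈ F ∧ Realises p.2 (restrictT t p.1 h)} with hSdef
  set g : {φ : Fin m → Fin n // StrictMono φ} → (Fin N → Fin n) × Colouring k N :=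
    fun φ => if h : φ ∈ B then Classical.choose (hchoice φ h) else Classical.choice hNE
    with hgdef
  have hg1 : ∀ φ ∈ B, g φ ∈ Sset := by
    intro φ h
    simp only [hgdef, dif_pos h]
    exact (Classical.choose_spec (hchoice φ h)).1
  have hg2 : ∀ φ ∈ B, ∀ i, (g φ).1 i ∈ Set.range φ.1 := by
    intro φ h
    simp only [hgdef, dif_pos h]
    exact (Classical.choose_spec (hchoice φ h)).2
  -- step 3 : counting
  have hfin : Sset.Finite := Set.toFinite _
  have hbp : badPairs t F = hfin.toFinset.card := Set.ncard_eq_toFinset_card _ hfin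
  have hcount : B.card ≤ ((n - N).choose (m - N)) * hfin.toFinset.card := by
    apply Finset.card_le_mul_card_image_of_maps_to (f := g) (t := hfin.toFinset)
    · intro φ hφ
      rw [Set.Finite.mem_toFinset]
      exact hg1 φ hφ
    · intro p hp
      rw [Set.Finite.mem_toFinset] at hp
      obtain ⟨hmono, hpF, hreal⟩ := hp
      have himg : (Finset.image p.1 Finset.univ).card = N := by
        rw [Finset.card_image_of_injective _ hmono.injective, Finset.card_univ,
          Fintype.card_fin]
      calc (B.filter (fun φ => g φ = p)).card
          ≤ (Finset.univ.filter (fun φ : {φ : Fin m → Fin n // StrictMono φ} =>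
              Finset.image p.1 Finset.univ ⊆ Finset.image φ.1 Finset.univ)).card := by
            apply Finset.card_le_card
            intro φ hφ
            obtain ⟨hφB, hgφ⟩ := Finset.mem_filter.mp hφ
            rw [Finset.mem_filter]
            refine ⟨Finset.mem_univ _, fun x hx => ?_⟩
            obtain ⟨i, _, rfl⟩ := Finset.mem_image.mp hx
            obtain ⟨j, hj⟩ := hgφ ▸ hg2 φ hφB i
            exact Finset.mem_image.mpr ⟨j, Finset.mem_univ _, hj⟩
        _ = (n - N).choose (m - N) := by
            rw [card_sm_filter _ (le_trans (le_of_eq himg) hmN), himg]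
  -- final arithmetic
  have hD'0 : (0 : ℝ) < ((n - N).choose (m - N) : ℝ) := by
    exact_mod_cast Nat.choose_pos (Nat.sub_le_sub_right hmn N)
  have hid2 : n.choose m * m.choose N = n.choose N * (n - N).choose (m - N) :=
    Nat.choose_mul hmN
  have hid2R : (n.choose m : ℝ) * (m.choose N : ℝ)
      = (n.choose N : ℝ) * ((n - N).choose (m - N) : ℝ) := by exact_mod_cast hid2
  have h1 : (ε / 2) * (n.choose m : ℝ)
      ≤ ((n - N).choose (m - N) : ℝ) * (badPairs t F : ℝ) := by
    refine hBlow.le.trans ?_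
    rw [hbp]
    exact_mod_cast hcount
  have h2 : (ε / 2) * (n.choose N : ℝ) ≤ (badPairs t F : ℝ) * (m.choose N : ℝ) := by
    have h3 := mul_le_mul_of_nonneg_right h1 hmN0.le
    have h4 : (ε / 2) * ((n.choose N : ℝ) * ((n - N).choose (m - N) : ℝ))
        ≤ (badPairs t F : ℝ) * (m.choose N : ℝ) * ((n - N).choose (m - N) : ℝ) := by
      calc (ε / 2) * ((n.choose N : ℝ) * ((n - N).choose (m - N) : ℝ))
          = (ε / 2) * ((n.choose m : ℝ) * (m.choose N : ℝ)) := by rw [hid2R]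
        _ = (ε / 2) * (n.choose m : ℝ) * (m.choose N : ℝ) := by ring
        _ ≤ ((n - N).choose (m - N) : ℝ) * (badPairs t F : ℝ) * (m.choose N : ℝ) := h3
        _ = (badPairs t F : ℝ) * (m.choose N : ℝ) * ((n - N).choose (m - N) : ℝ) := by ring
    have h5 : (ε / 2) * (n.choose N : ℝ) * ((n - N).choose (m - N) : ℝ)
        ≤ (badPairs t F : ℝ) * (m.choose N : ℝ) * ((n - N).choose (m - N) : ℝ) := by
      calc (ε / 2) * (n.choose N : ℝ) * ((n - N).choose (m - N) : ℝ)
          = (ε / 2) * ((n.choose N : ℝ) * ((n - N).choose (m - N) : ℝ)) := by ring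
        _ ≤ _ := h4
    exact le_of_mul_le_mul_right h5 hD'0
  rw [show 1 / (2 * (m.choose N : ℝ)) * ε * (n.choose N : ℝ)
      = ((ε / 2) * (n.choose N : ℝ)) / (m.choose N : ℝ) by ring, div_le_iff₀ hmN0]
  exact h2
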